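/- Let q be a positive integer, b an integer, and x ≥ 1 a real number. Then the number of square-free integers m with 1 ≤ m ≤ x and m ≡ b (mod q) equals Σ_{1 ≤ d ≤ √x, gcd(q,d²) | b} μ(d)·(x·gcd(q,d²)/(q d²) + O(1)), where μ is the Möbius function and the implied constant is absolute. -/

import Mathlib

open scoped ArithmeticFunction ArithmeticFunction.Moebius Classical

private lemma sq_dvd_iff' {s t d : ℕ} (ht : Squarefree t) (hs : s ≠ 0) (hd : d ≠ 0) :
    d ^ 2 ∣ s ^ 2 * t ↔ d ∣ s := by
  have htz : t ≠ 0 := ht.ne_zero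
  constructor
  · intro h
    rw [← Nat.factorization_le_iff_dvd hd hs]
    have h' := (Nat.factorization_le_iff_dvd (pow_ne_zero 2 hd)
      (mul_ne_zero (pow_ne_zero 2 hs) htz)).mpr h
    intro p
    have h2 := h' p
    rw [Nat.factorization_mul (pow_ne_zero 2 hs) htz, Nat.factorization_pow,
      Nat.factorization_pow] at h2
    have h3 := ht.natFactorization_le_one p
    simp only [Finsupp.coe_add, Finsupp.coe_smul, Pi.add_apply, Pi.smul_apply,
      smul_eq_mul] at h2
    omega
  · intro h
    exact Dvd.dvd.mul_right (pow_dvd_pow_of_dvd h 2) t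

private lemma moebius_sum_sq (m : ℕ) (hm : m ≠ 0) (D : ℕ) (hD : ∀ d : ℕ, d ^ 2 ∣ m → d ≤ D) :
    (∑ d ∈ Finset.Icc 1 D, if d ^ 2 ∣ m then (μ d : ℤ) else 0)
      = if Squarefree m then 1 else 0 := by
  obtain ⟨t, s, hst, ht⟩ := Nat.sq_mul_squarefree m
  have hs : s ≠ 0 := by
    rintro rfl
    simp at hst
    exact hm hst.symm
  have hsum : (∑ d ∈ Finset.Icc 1 D, if d ^ 2 ∣ m then (μ d : ℤ) else 0)
      = ∑ d ∈ s.divisors, (μ d : ℤ) := by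
    rw [← Finset.sum_filter]
    apply Finset.sum_congr _ (fun _ _ => rfl)
    ext d
    simp only [Finset.mem_filter, Finset.mem_Icc, Nat.mem_divisors]
    constructor
    · rintro ⟨⟨h1, h2⟩, h3⟩
      refine ⟨(sq_dvd_iff' ht hs (by omega)).mp ?_, hs⟩
      rwa [hst]
    · rintro ⟨h1, -⟩
      have hdm : d ^ 2 ∣ m := by
        rw [← hst]; exact Dvd.dvd.mul_right (pow_dvd_pow_of_dvd h1 2) t
      have hd0 : d ≠ 0 := by
        rintro rfl
        simp only [zero_pow, ne_eq, OfNat.ofNat_ne_zero, not_false_eq_true,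
          zero_dvd_iff] at hdm
        exact hm hdm
      exact ⟨⟨Nat.one_le_iff_ne_zero.mpr hd0, hD d hdm⟩, hdm⟩
  rw [hsum]
  have hz := congrArg (fun f : ArithmeticFunction ℤ => f s)
    ArithmeticFunction.moebius_mul_coe_zeta
  simp only [ArithmeticFunction.coe_mul_zeta_apply, ArithmeticFunction.one_apply] at hz
  rw [hz]
  have hiff : Squarefree m ↔ s = 1 := by
    constructor
    · intro h
      refine Nat.isUnit_iff.mp (h s ?_)
      rw [← hst, ← pow_two]
      exact Dvd.dvd.mul_right dvd_rfl t
    · rintro rfl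
      rw [← hst]; simpa using ht
  simp [hiff]

private lemma count_residue (L X : ℕ) (hL : 0 < L) (c : ℤ) :
    |(((Finset.Icc 1 X).filter
        (fun m : ℕ => (m : ℤ) % (L : ℤ) = c % (L : ℤ))).card : ℝ) - X / L| ≤ 1 := by
  have hLz : (L : ℤ) ≠ 0 := by exact_mod_cast hL.ne'
  set v : ℕ := (c % L).toNat with hv
  have hvc : (v : ℤ) = c % L := Int.toNat_of_nonneg (Int.emod_nonneg c hLz)
  have hfe : (Finset.Icc 1 X).filter (fun m : ℕ => (m : ℤ) % (L : ℤ) = c % (L : ℤ))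
      = (Finset.Ico 1 (X + 1)).filter (fun m : ℕ => m ≡ v [MOD L]) := by
    rw [Finset.Ico_add_one_right_eq_Icc]
    apply Finset.filter_congr
    intro m _
    rw [← Int.natCast_modEq_iff]
    constructor
    · intro h
      show (m : ℤ) % L = (v : ℤ) % L
      rw [hvc, Int.emod_emod_of_dvd _ dvd_rfl, h]
    · intro h
      have : (m : ℤ) % L = (v : ℤ) % L := h
      rw [hvc, Int.emod_emod_of_dvd _ dvd_rfl] at this
      exact this
  rw [hfe]
  have hcard := Nat.Ico_filter_modEq_card 1 (X + 1) hL v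
  set A : ℤ := ⌈((X : ℚ) + 1 - v) / L⌉ - ⌈((1 : ℚ) - v) / L⌉ with hA
  have hcard' : ((Finset.filter (fun x => x ≡ v [MOD L]) (Finset.Ico 1 (X + 1))).card : ℤ)
      = max A 0 := by
    rw [hcard, hA]
    push_cast
    ring_nf
  -- bound in ℚ
  have hLQ : (0 : ℚ) < L := by exact_mod_cast hL
  have key : |(((Finset.filter (fun x => x ≡ v [MOD L]) (Finset.Ico 1 (X + 1))).card : ℚ))
      - X / L| ≤ 1 := by
    have hAcast : ((Finset.filter (fun x => x ≡ v [MOD L]) (Finset.Ico 1 (X + 1))).card : ℚ)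
        = max (A : ℚ) 0 := by
      have := congrArg (fun z : ℤ => (z : ℚ)) hcard'
      simp only [Int.cast_max, Int.cast_natCast, Int.cast_zero] at this
      exact this
    have hub : (A : ℚ) ≤ X / L + 1 := by
      have h1 : ((⌈((X : ℚ) + 1 - v) / L⌉ : ℚ)) < ((X : ℚ) + 1 - v) / L + 1 :=
        Int.ceil_lt_add_one _
      have h2 : ((1 : ℚ) - v) / L ≤ (⌈((1 : ℚ) - v) / L⌉ : ℚ) := Int.le_ceil _
      have h3 : ((X : ℚ) + 1 - v) / L - ((1 : ℚ) - v) / L = X / L := by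
        field_simp
        ring
      push_cast [hA]
      linarith
    have hlb : (X : ℚ) / L - 1 ≤ (A : ℚ) := by
      have h1 : ((X : ℚ) + 1 - v) / L ≤ (⌈((X : ℚ) + 1 - v) / L⌉ : ℚ) := Int.le_ceil _
      have h2 : ((⌈((1 : ℚ) - v) / L⌉ : ℚ)) < ((1 : ℚ) - v) / L + 1 := Int.ceil_lt_add_one _
      have h3 : ((X : ℚ) + 1 - v) / L - ((1 : ℚ) - v) / L = X / L := by
        field_simp
        ring
      push_cast [hA]
      linarith
    have hXL : (0 : ℚ) ≤ (X : ℚ) / L := by positivity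
    rw [hAcast, abs_le]
    rcases le_or_gt 0 (A : ℚ) with h | h
    · rw [max_eq_left h]; constructor <;> linarith
    · rw [max_eq_right h.le]; constructor <;> linarith
  -- transfer to ℝ
  have key' : ((|(((Finset.filter (fun x => x ≡ v [MOD L]) (Finset.Ico 1 (X + 1))).card : ℚ))
      - (X : ℚ) / (L : ℚ)| : ℚ) : ℝ) ≤ ((1 : ℚ) : ℝ) := by exact_mod_cast key
  push_cast at key'
  convert key' using 3

theorem stmt5 :
    ∃ C : ℝ, 0 < C ∧ ∀ (q : ℕ) (b : ℤ) (x : ℝ), 1 ≤ q → 1 ≤ x →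
      ∃ E : ℕ → ℝ, (∀ d, |E d| ≤ C) ∧
        (((Finset.Icc 1 ⌊x⌋₊).filter
            (fun m : ℕ => Squarefree m ∧ (m : ℤ) % (q : ℤ) = b % (q : ℤ))).card : ℝ)
          = ∑ d ∈ Finset.Icc 1 ⌊Real.sqrt x⌋₊,
              if ((Nat.gcd q (d ^ 2) : ℤ) ∣ b) then
                (μ d : ℝ) * (x * (Nat.gcd q (d ^ 2)) / (q * d ^ 2) + E d)
              else 0 := by
  refine ⟨2, by norm_num, fun q b x hq hx => ?_⟩
  have hx0 : (0 : ℝ) ≤ x := by linarith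
  set X : ℕ := ⌊x⌋₊ with hXdef
  set D : ℕ := ⌊Real.sqrt x⌋₊ with hDdef
  set N : ℕ → ℕ := fun d =>
    ((Finset.Icc 1 X).filter
      (fun m : ℕ => d ^ 2 ∣ m ∧ (m : ℤ) % (q : ℤ) = b % (q : ℤ))).card with hNdef
  set E : ℕ → ℝ := fun d =>
    if (d ∈ Finset.Icc 1 D ∧ ((Nat.gcd q (d ^ 2) : ℤ) ∣ b)) then
      (N d : ℝ) - x * (Nat.gcd q (d ^ 2)) / (q * d ^ 2) else 0 with hEdef
  -- basic facts
  have hXx : (X : ℝ) ≤ x := Nat.floor_le hx0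
  have hxX : x < X + 1 := Nat.lt_floor_add_one x
  -- key per-d facts for d in range
  have main : ∀ d ∈ Finset.Icc 1 D, ((Nat.gcd q (d ^ 2) : ℤ) ∣ b) →
      0 < Nat.lcm q (d ^ 2) ∧
      (x * (Nat.gcd q (d ^ 2) : ℝ) / (q * d ^ 2) = x / (Nat.lcm q (d ^ 2))) ∧
      |(N d : ℝ) - x / (Nat.lcm q (d ^ 2))| ≤ 2 := by
    intro d hd hgb
    rw [Finset.mem_Icc] at hd
    have hd1 : 1 ≤ d := hd.1
    have hdz : d ≠ 0 := by omega
    have hqz : q ≠ 0 := by omega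
    set g : ℕ := Nat.gcd q (d ^ 2) with hgdef
    set L : ℕ := Nat.lcm q (d ^ 2) with hLdef
    have hgpos : 0 < g := Nat.gcd_pos_of_pos_left _ (by omega)
    have hLpos : 0 < L := Nat.pos_of_ne_zero (Nat.lcm_ne_zero hqz (pow_ne_zero 2 hdz))
    have hgL : g * L = q * d ^ 2 := Nat.gcd_mul_lcm q (d ^ 2)
    -- existence of combined residue
    obtain ⟨t, ht⟩ := hgb
    set c : ℤ := (d ^ 2 : ℤ) * (Int.gcdB q (d ^ 2)) * t with hcdef
    have hbezout : (g : ℤ) = (q : ℤ) * Int.gcdA q (d ^ 2) + (d ^ 2 : ℤ) * Int.gcdB q (d ^ 2) := by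
      have := Int.gcd_eq_gcd_ab (q : ℤ) ((d : ℤ) ^ 2)
      rw [show ((d : ℤ) ^ 2) = ((d ^ 2 : ℕ) : ℤ) by push_cast; ring] at this
      rw [Int.gcd_natCast_natCast] at this
      exact_mod_cast this
    have hc1 : ((d ^ 2 : ℕ) : ℤ) ∣ c := ⟨Int.gcdB q (d ^ 2) * t, by rw [hcdef]; push_cast; ring⟩
    have hc2 : (q : ℤ) ∣ c - b := by
      refine ⟨-(Int.gcdA q (d ^ 2)) * t, ?_⟩
      rw [hcdef, ht]
      calc (d ^ 2 : ℤ) * (Int.gcdB q (d ^ 2)) * t - (g : ℤ) * t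
          = ((d ^ 2 : ℤ) * (Int.gcdB q (d ^ 2)) - (g : ℤ)) * t := by ring
        _ = (q : ℤ) * (-(Int.gcdA q (d ^ 2)) * t) := by rw [hbezout]; push_cast; ring
    have hiff : ∀ m : ℤ, (((d ^ 2 : ℕ) : ℤ) ∣ m ∧ (q : ℤ) ∣ m - b) ↔ ((L : ℕ) : ℤ) ∣ m - c := by
      intro m
      constructor
      · rintro ⟨h1, h2⟩
        have hd2 : ((d ^ 2 : ℕ) : ℤ) ∣ m - c := dvd_sub h1 hc1
        have hq2 : (q : ℤ) ∣ m - c := by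
          have : m - c = (m - b) - (c - b) := by ring
          rw [this]; exact dvd_sub h2 hc2
        have := _root_.lcm_dvd hq2 hd2
        rwa [← Int.coe_lcm, Int.lcm, Int.natAbs_natCast, Int.natAbs_natCast] at this
      · intro h
        have hqL : (q : ℤ) ∣ ((L : ℕ) : ℤ) := by exact_mod_cast Nat.dvd_lcm_left q (d ^ 2)
        have hdL : ((d ^ 2 : ℕ) : ℤ) ∣ ((L : ℕ) : ℤ) := by
          exact_mod_cast Nat.dvd_lcm_right q (d ^ 2)
        constructor
        · have h1 : ((d ^ 2 : ℕ) : ℤ) ∣ m - c := hdL.trans h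
          have : m = (m - c) + c := by ring
          rw [this]; exact dvd_add h1 hc1
        · have h1 : (q : ℤ) ∣ m - c := hqL.trans h
          have : m - b = (m - c) + (c - b) := by ring
          rw [this]; exact dvd_add h1 hc2
    -- N d equals the residue count
    have hNd : N d = ((Finset.Icc 1 X).filter
        (fun m : ℕ => (m : ℤ) % (L : ℤ) = c % (L : ℤ))).card := by
      show ((Finset.Icc 1 X).filter
        (fun m : ℕ => d ^ 2 ∣ m ∧ (m : ℤ) % (q : ℤ) = b % (q : ℤ))).card = _
      congr 1
      apply Finset.filter_congr
      intro m _
      have e1 : (d ^ 2 ∣ m) ↔ ((d ^ 2 : ℕ) : ℤ) ∣ (m : ℤ) := by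
        exact_mod_cast (Int.natCast_dvd_natCast).symm
      have e2 : ((m : ℤ) % (q : ℤ) = b % (q : ℤ)) ↔ (q : ℤ) ∣ (m : ℤ) - b := by
        rw [show ((m : ℤ) % (q : ℤ) = b % (q : ℤ)) ↔ Int.ModEq q m b from Iff.rfl,
          Int.modEq_iff_dvd, dvd_sub_comm]
      have e3 : ((m : ℤ) % (L : ℤ) = c % (L : ℤ)) ↔ ((L : ℕ) : ℤ) ∣ (m : ℤ) - c := by
        rw [show ((m : ℤ) % (L : ℤ) = c % (L : ℤ)) ↔ Int.ModEq L m c from Iff.rfl,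
          Int.modEq_iff_dvd, dvd_sub_comm]
      rw [e1, e2, e3]
      exact hiff m
    refine ⟨hLpos, ?_, ?_⟩
    · have hgR : (0 : ℝ) < (g : ℝ) := by exact_mod_cast hgpos
      have hLR : (0 : ℝ) < (L : ℝ) := by exact_mod_cast hLpos
      have hqd : ((q : ℝ) * (d : ℝ) ^ 2) = (g : ℝ) * (L : ℝ) := by
        exact_mod_cast congrArg (fun n : ℕ => (n : ℝ)) hgL.symm
      rw [hqd]
      field_simp
    · have hcount := count_residue L X hLpos c
      rw [← hNd] at hcount
      have hdiff : |(X : ℝ) / L - x / L| ≤ 1 := by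
        have hLR : (0 : ℝ) < (L : ℝ) := by exact_mod_cast hLpos
        have hLR1 : (1 : ℝ) ≤ (L : ℝ) := by exact_mod_cast hLpos
        rw [div_sub_div_same, abs_le]
        constructor
        · rw [le_div_iff₀ hLR]
          nlinarith
        · rw [div_le_iff₀ hLR]
          nlinarith
      calc |(N d : ℝ) - x / L| = |((N d : ℝ) - X / L) + ((X : ℝ) / L - x / L)| := by ring_nf
        _ ≤ |(N d : ℝ) - X / L| + |(X : ℝ) / L - x / L| := abs_add_le _ _
        _ ≤ 1 + 1 := add_le_add hcount hdiff
        _ = 2 := by norm_num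
  refine ⟨E, ?_, ?_⟩
  · intro d
    simp only [hEdef]
    split_ifs with h
    · obtain ⟨hd, hgb⟩ := h
      obtain ⟨hL, heq, hbd⟩ := main d hd hgb
      rw [heq]
      exact hbd
    · simp
  · -- main identity
    have hN0 : ∀ d ∈ Finset.Icc 1 D, ¬ ((Nat.gcd q (d ^ 2) : ℤ) ∣ b) → N d = 0 := by
      intro d hd hgb
      show ((Finset.Icc 1 X).filter
        (fun m : ℕ => d ^ 2 ∣ m ∧ (m : ℤ) % (q : ℤ) = b % (q : ℤ))).card = 0
      rw [Finset.card_eq_zero, Finset.filter_eq_empty_iff]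
      rintro m hm ⟨h1, h2⟩
      apply hgb
      have e2 : (q : ℤ) ∣ (m : ℤ) - b := by
        rw [show ((m : ℤ) % (q : ℤ) = b % (q : ℤ)) ↔ Int.ModEq q m b from Iff.rfl,
          Int.modEq_iff_dvd, dvd_sub_comm] at h2
        exact h2
      have hg1 : (Nat.gcd q (d ^ 2) : ℤ) ∣ (m : ℤ) := by
        have : ((Nat.gcd q (d ^ 2) : ℕ) : ℤ) ∣ ((d ^ 2 : ℕ) : ℤ) := by
          exact_mod_cast Nat.gcd_dvd_right q (d ^ 2)
        exact this.trans (by exact_mod_cast h1)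
      have hg2 : (Nat.gcd q (d ^ 2) : ℤ) ∣ (m : ℤ) - b := by
        have : ((Nat.gcd q (d ^ 2) : ℕ) : ℤ) ∣ (q : ℤ) := by
          exact_mod_cast Nat.gcd_dvd_left q (d ^ 2)
        exact this.trans e2
      have : (Nat.gcd q (d ^ 2) : ℤ) ∣ (m : ℤ) - ((m : ℤ) - b) := dvd_sub hg1 hg2
      simpa using this
    have key : (((Finset.Icc 1 X).filter
        (fun m : ℕ => Squarefree m ∧ (m : ℤ) % (q : ℤ) = b % (q : ℤ))).card : ℤ)
        = ∑ d ∈ Finset.Icc 1 D, (μ d : ℤ) * (N d : ℤ) := by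
      have hsplit : (Finset.Icc 1 X).filter
          (fun m : ℕ => Squarefree m ∧ (m : ℤ) % (q : ℤ) = b % (q : ℤ))
          = ((Finset.Icc 1 X).filter
              (fun m : ℕ => (m : ℤ) % (q : ℤ) = b % (q : ℤ))).filter
              (fun m : ℕ => Squarefree m) := by
        rw [Finset.filter_filter]
        apply Finset.filter_congr
        intro m _
        exact ⟨fun ⟨a, b⟩ => ⟨b, a⟩, fun ⟨a, b⟩ => ⟨b, a⟩⟩
      rw [hsplit]
      rw [← Finset.sum_boole]
      have hstep : ∀ m ∈ (Finset.Icc 1 X).filter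
          (fun m : ℕ => (m : ℤ) % (q : ℤ) = b % (q : ℤ)),
          (if Squarefree m then (1 : ℤ) else 0)
            = ∑ d ∈ Finset.Icc 1 D, if d ^ 2 ∣ m then (μ d : ℤ) else 0 := by
        intro m hm
        rw [Finset.mem_filter, Finset.mem_Icc] at hm
        obtain ⟨⟨hm1, hm2⟩, -⟩ := hm
        refine (moebius_sum_sq m (by omega) D ?_).symm
        intro d hdm
        have hdx : ((d : ℝ)) ^ 2 ≤ x := by
          have h1 : d ^ 2 ≤ m := Nat.le_of_dvd (by omega) hdm
          have h2 : (m : ℝ) ≤ x := le_trans (by exact_mod_cast hm2) hXx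
          calc ((d : ℝ)) ^ 2 = ((d ^ 2 : ℕ) : ℝ) := by push_cast; ring
            _ ≤ (m : ℝ) := by exact_mod_cast h1
            _ ≤ x := h2
        have : (d : ℝ) ≤ Real.sqrt x := (Real.le_sqrt (by positivity) hx0).mpr hdx
        exact Nat.le_floor this
      rw [Finset.sum_congr rfl hstep, Finset.sum_comm]
      apply Finset.sum_congr rfl
      intro d hd
      rw [← Finset.sum_filter, Finset.filter_filter, Finset.sum_const]
      have : (Finset.Icc 1 X).filter
          (fun m : ℕ => ((m : ℤ) % (q : ℤ) = b % (q : ℤ)) ∧ d ^ 2 ∣ m)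
          = (Finset.Icc 1 X).filter
          (fun m : ℕ => d ^ 2 ∣ m ∧ ((m : ℤ) % (q : ℤ) = b % (q : ℤ))) := by
        apply Finset.filter_congr
        intro m _
        exact ⟨fun ⟨a, b⟩ => ⟨b, a⟩, fun ⟨a, b⟩ => ⟨b, a⟩⟩
      rw [this]
      show _ = (μ d : ℤ) * ((((Finset.Icc 1 X).filter
        (fun m : ℕ => d ^ 2 ∣ m ∧ (m : ℤ) % (q : ℤ) = b % (q : ℤ))).card : ℕ) : ℤ)
      simp [mul_comm]
    -- cast to ℝ and finish termwise
    have keyR : (((Finset.Icc 1 X).filter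
        (fun m : ℕ => Squarefree m ∧ (m : ℤ) % (q : ℤ) = b % (q : ℤ))).card : ℝ)
        = ∑ d ∈ Finset.Icc 1 D, (μ d : ℝ) * (N d : ℝ) := by
      exact_mod_cast congrArg (fun z : ℤ => (z : ℝ)) key
    rw [keyR]
    apply Finset.sum_congr rfl
    intro d hd
    by_cases hgb : ((Nat.gcd q (d ^ 2) : ℤ) ∣ b)
    · rw [if_pos hgb]
      have hE : E d = (N d : ℝ) - x * (Nat.gcd q (d ^ 2)) / (q * d ^ 2) := by
        simp only [hEdef]; rw [if_pos ⟨hd, hgb⟩]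
      rw [hE]
      ring
    · rw [if_neg hgb, hN0 d hd hgb]
      simp
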